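/- arXiv:2303.12824 — 3 statements merged into one kernel-verified Lean document; each statement's English description precedes it below -/
import Mathlib

section
/- Consider the triangular prism: the graph on vertices {1,…,6} with triangles {1,2,3} and {4,5,6} and matching edges {1,4}, {2,5}, {3,6}. Let f be the proper 3-coloring with color classes {1,5}, {2,6}, {3,4} and g the proper 3-coloring with color classes {1,6}, {2,4}, {3,5}. Then f and g are not Kempe equivalent (with respect to 3 colors). -/
open SimpleGraph

/-- `f` is a proper `k`-coloring of `G`. -/
def IsProperColoring {V : Type} (G : SimpleGraph V) (k : ℕ) (f : V → Fin k) : Prop :=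
  ∀ ⦃u v : V⦄, G.Adj u v → f u ≠ f v

/-- `C` is a connected component of the subgraph of `G` induced on `f⁻¹(i) ∪ f⁻¹(j)`. -/
def IsKempeComponent {V : Type} (G : SimpleGraph V) {k : ℕ} (f : V → Fin k)
    (i j : Fin k) (C : Set V) : Prop :=
  ∃ (w : V) (hw : w ∈ {v | f v = i ∨ f v = j}),
    C = {x | ∃ hx : x ∈ {v | f v = i ∨ f v = j},
      (G.induce {v | f v = i ∨ f v = j}).Reachable ⟨w, hw⟩ ⟨x, hx⟩}

/-- `g` is obtained from `f` by a Kempe switching: swapping colors `i ≠ j` on a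
connected component `C` of the subgraph induced on the two color classes. -/
def KempeStep {V : Type} (G : SimpleGraph V) {k : ℕ} (f g : V → Fin k) : Prop :=
  ∃ (i j : Fin k) (C : Set V), i ≠ j ∧ IsKempeComponent G f i j C ∧
    (∀ x, x ∉ C → g x = f x) ∧
    (∀ x ∈ C, (f x = i → g x = j) ∧ (f x = j → g x = i))

/-- Kempe equivalence: a finite sequence of Kempe switchings. -/
def KempeEquiv {V : Type} (G : SimpleGraph V) {k : ℕ} (f g : V → Fin k) : Prop :=
  Relation.ReflTransGen (KempeStep G) f g

/-- The replication graph `G_a`: each vertex `i` of `G` is replaced by a clique of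
`a i` vertices, with complete joins between cliques along edges of `G`. -/
def replication {n : ℕ} (G : SimpleGraph (Fin n)) (a : Fin n → ℕ) :
    SimpleGraph (Σ i : Fin n, Fin (a i)) where
  Adj x y := x ≠ y ∧ (x.1 = y.1 ∨ G.Adj x.1 y.1)
  symm := by
    constructor
    rintro x y ⟨hne, h⟩
    refine ⟨hne.symm, ?_⟩
    rcases h with h | h
    · exact Or.inl h.symm
    · exact Or.inr h.symm
  loopless := by constructor; rintro x ⟨hne, _⟩; exact hne rfl

/-- The triangular prism `K₃ □ K₂`. -/
def prism : SimpleGraph (Fin 3 × Fin 2) :=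
  (⊤ : SimpleGraph (Fin 3)).boxProd (⊤ : SimpleGraph (Fin 2))

instance : DecidableRel prism.Adj := fun _ _ =>
  decidable_of_iff _ boxProd_adj.symm

lemma prism_adj_horiz {p q : Fin 3} (h : p ≠ q) (z : Fin 2) : prism.Adj (p, z) (q, z) :=
  Or.inl ⟨h, rfl⟩

lemma prism_adj_vert (p : Fin 3) {y z : Fin 2} (h : y ≠ z) : prism.Adj (p, y) (p, z) :=
  Or.inr ⟨h, rfl⟩

/-- The invariant: properness plus "bottom row is the top row shifted by 2". -/
def PrismInv (f : Fin 3 × Fin 2 → Fin 3) : Prop :=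
  IsProperColoring prism 3 f ∧ ∀ p : Fin 3, f (p, 1) = f (p + 2, 0)

lemma step_inv {f g : Fin 3 × Fin 2 → Fin 3} (hf : PrismInv f) (h : KempeStep prism f g) :
    PrismInv g := by
  obtain ⟨hprop, hshift⟩ := hf
  obtain ⟨i, j, C, hij, ⟨w, hw, hC⟩, hout, hin⟩ := h
  set S : Set (Fin 3 × Fin 2) := {v | f v = i ∨ f v = j} with hSdef
  have hinj : Function.Injective (fun p : Fin 3 => f (p, 0)) := by
    intro p q hpq
    by_contra hne
    exact hprop (prism_adj_horiz hne 0) hpq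
  have hsurj : Function.Surjective (fun p : Fin 3 => f (p, 0)) :=
    Finite.injective_iff_surjective.mp hinj
  obtain ⟨a, ha⟩ := hsurj i
  obtain ⟨b, hb⟩ := hsurj j
  have hab : a ≠ b := fun hE => hij (by rw [← ha, ← hb, hE])
  have key32 : ∀ p q : Fin 3, p + 2 = q → p = q + 1 := by decide
  have key12 : ∀ q : Fin 3, q + 1 + 2 = q := by decide
  have key11 : ∀ p q : Fin 3, p ≠ q → p + 1 ≠ q + 1 := by decide
  have keyc : ∀ p q : Fin 3, p ≠ q → p = q + 1 ∨ q = p + 1 := by decide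
  have hmem : ∀ x ∈ S, x = (a, 0) ∨ x = (b, 0) ∨ x = (a + 1, 1) ∨ x = (b + 1, 1) := by
    rintro ⟨p, q⟩ hx
    fin_cases q
    · have hx' : f (p, 0) = i ∨ f (p, 0) = j := hx
      rcases hx' with hx' | hx'
      · exact Or.inl (by rw [hinj (hx'.trans ha.symm)]; rfl)
      · exact Or.inr (Or.inl (by rw [hinj (hx'.trans hb.symm)]; rfl))
    · have hx' : f (p, 1) = i ∨ f (p, 1) = j := hx
      rw [hshift p] at hx'
      rcases hx' with hx' | hx'
      · exact Or.inr (Or.inr (Or.inl (by rw [key32 p a (hinj (hx'.trans ha.symm))]; rfl)))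
      · exact Or.inr (Or.inr (Or.inr (by rw [key32 p b (hinj (hx'.trans hb.symm))]; rfl)))
  have hAmem : (a, 0) ∈ S := Or.inl ha
  have hBmem : (b, 0) ∈ S := Or.inr hb
  have ha1 : f (a + 1, 1) = i := by rw [hshift, key12]; exact ha
  have hb1 : f (b + 1, 1) = j := by rw [hshift, key12]; exact hb
  have hA1mem : (a + 1, 1) ∈ S := Or.inl ha1
  have hB1mem : (b + 1, 1) ∈ S := Or.inr hb1
  have hab1 : a + 1 ≠ b + 1 := key11 a b hab
  have e0 : (prism.induce S).Adj ⟨(a, 0), hAmem⟩ ⟨(b, 0), hBmem⟩ := prism_adj_horiz hab 0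
  have hcase : a = b + 1 ∨ b = a + 1 := keyc a b hab
  have hr2 : (prism.induce S).Reachable ⟨(a, 0), hAmem⟩ ⟨(a + 1, 1), hA1mem⟩ ∧
      (prism.induce S).Reachable ⟨(a, 0), hAmem⟩ ⟨(b + 1, 1), hB1mem⟩ := by
    rcases hcase with hc | hc
    · have e1 : (prism.induce S).Adj ⟨(a, 0), hAmem⟩ ⟨(b + 1, 1), hB1mem⟩ := by
        show prism.Adj (a, 0) (b + 1, 1)
        rw [hc]
        exact prism_adj_vert _ (by decide)
      have e2 : (prism.induce S).Adj ⟨(b + 1, 1), hB1mem⟩ ⟨(a + 1, 1), hA1mem⟩ :=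
        prism_adj_horiz hab1.symm 1
      exact ⟨e1.reachable.trans e2.reachable, e1.reachable⟩
    · have e1 : (prism.induce S).Adj ⟨(b, 0), hBmem⟩ ⟨(a + 1, 1), hA1mem⟩ := by
        show prism.Adj (b, 0) (a + 1, 1)
        rw [← hc]
        exact prism_adj_vert _ (by decide)
      have e2 : (prism.induce S).Adj ⟨(a + 1, 1), hA1mem⟩ ⟨(b + 1, 1), hB1mem⟩ :=
        prism_adj_horiz hab1 1
      exact ⟨e0.reachable.trans e1.reachable,
        (e0.reachable.trans e1.reachable).trans e2.reachable⟩
  have hreachA : ∀ x, ∀ hx : x ∈ S, (prism.induce S).Reachable ⟨(a, 0), hAmem⟩ ⟨x, hx⟩ := by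
    intro x hx
    rcases hmem x hx with hE | hE | hE | hE <;> subst hE
    · exact Reachable.refl _
    · exact e0.reachable
    · exact hr2.1
    · exact hr2.2
  have hCmem : ∀ x, ∀ hx : x ∈ S, x ∈ C := by
    intro x hx
    rw [hC]
    exact ⟨hx, (hreachA w hw).symm.trans (hreachA x hx)⟩
  have hg : ∀ x, g x = Equiv.swap i j (f x) := by
    intro x
    by_cases hx : x ∈ S
    · rcases hx with hxi | hxj
      · rw [(hin x (hCmem x (Or.inl hxi))).1 hxi, hxi, Equiv.swap_apply_left]
      · rw [(hin x (hCmem x (Or.inr hxj))).2 hxj, hxj, Equiv.swap_apply_right]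
    · have hxC : x ∉ C := fun hc => hx (by rw [hC] at hc; exact hc.1)
      rw [hout x hxC, Equiv.swap_apply_of_ne_of_ne]
      · exact fun hE => hx (Or.inl hE)
      · exact fun hE => hx (Or.inr hE)
  constructor
  · intro u v huv heq
    exact hprop huv ((Equiv.swap i j).injective (by rw [← hg u, ← hg v]; exact heq))
  · intro p
    rw [hg, hg, hshift p]

lemma kempeEquiv_inv {f g : Fin 3 × Fin 2 → Fin 3} (h0 : PrismInv f)
    (h : KempeEquiv prism f g) : PrismInv g := by
  induction h with
  | refl => exact h0
  | tail _ hstep ih => exact step_inv ih hstep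

/-- the two proper 3-colorings of the triangular prism with color
classes `{1,5},{2,6},{3,4}` resp. `{1,6},{2,4},{3,5}` are proper and not Kempe
equivalent. -/
theorem stmt9 :
    IsProperColoring prism 3 (fun v => if v.2 = 0 then v.1 else v.1 + 2) ∧
    IsProperColoring prism 3 (fun v => if v.2 = 0 then v.1 else v.1 + 1) ∧
    ¬ KempeEquiv prism (fun v => if v.2 = 0 then v.1 else v.1 + 2)
        (fun v => if v.2 = 0 then v.1 else v.1 + 1) := by
  have hp1 : IsProperColoring prism 3 (fun v => if v.2 = 0 then v.1 else v.1 + 2) := by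
    unfold IsProperColoring; decide
  have hp2 : IsProperColoring prism 3 (fun v => if v.2 = 0 then v.1 else v.1 + 1) := by
    unfold IsProperColoring; decide
  refine ⟨hp1, hp2, ?_⟩
  intro h
  have h0 : PrismInv (fun v => if v.2 = 0 then v.1 else v.1 + 2) := ⟨hp1, by decide⟩
  have hg : PrismInv (fun v => if v.2 = 0 then v.1 else v.1 + 1) :=
    kempeEquiv_inv h0 h
  have := hg.2 0
  simp at this
end

section
/- In the triangular prism K₃ □ K₂, for every pair of distinct colors {i,j} ⊆ {1,2,3} and every proper 3-coloring f, the subgraph induced on f⁻¹(i) ∪ f⁻¹(j) is connected; consequently every Kempe switching applied to a proper 3-coloring of the triangular prism merely permutes two colors globally, and the color-class partition of any proper 3-coloring is invariant under Kempe equivalence. -/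
open SimpleGraph

lemma fin3_aux : ∀ a0 a1 b0 b1 : Fin 3, a1 ≠ a0 → b1 ≠ b0 → a1 ≠ b1 → a0 ≠ b0 →
    a1 = b0 ∨ b1 = a0 := by decide

lemma prism_adj_tri (x y : Fin 3) (t : Fin 2) (h : x ≠ y) : prism.Adj (x, t) (y, t) := by
  simp [prism, boxProd_adj, h]

lemma prism_adj_vert_s10 (x : Fin 3) : prism.Adj (x, 0) (x, 1) := by
  simp [prism, boxProd_adj]

lemma connected_aux (f : Fin 3 × Fin 2 → Fin 3) (hf : IsProperColoring prism 3 f)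
    (i j : Fin 3) (hij : i ≠ j) :
    (prism.induce {v | f v = i ∨ f v = j}).Connected := by
  have inj : ∀ t : Fin 2, Function.Injective (fun x : Fin 3 => f (x, t)) := by
    intro t x y h
    by_contra hxy
    exact hf (prism_adj_tri x y t hxy) h
  have surj : ∀ t : Fin 2, Function.Surjective (fun x : Fin 3 => f (x, t)) :=
    fun t => Finite.surjective_of_injective (inj t)
  obtain ⟨a0, ha0⟩ := surj 0 i
  obtain ⟨b0, hb0⟩ := surj 0 j
  obtain ⟨a1, ha1⟩ := surj 1 i
  obtain ⟨b1, hb1⟩ := surj 1 j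
  simp only at ha0 hb0 ha1 hb1
  have hab0 : a0 ≠ b0 := fun h => hij (by rw [← ha0, ← hb0, h])
  have hab1 : a1 ≠ b1 := fun h => hij (by rw [← ha1, ← hb1, h])
  have haa : a1 ≠ a0 := fun h => hf (prism_adj_vert_s10 a0) (by rw [ha0, ← h, ha1])
  have hbb : b1 ≠ b0 := fun h => hf (prism_adj_vert_s10 b0) (by rw [hb0, ← h, hb1])
  set S : Set (Fin 3 × Fin 2) := {v | f v = i ∨ f v = j} with hS
  have mem0 : ∀ x : Fin 3, (x, (0 : Fin 2)) ∈ S → x = a0 ∨ x = b0 := by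
    rintro x (h | h)
    · exact Or.inl (inj 0 (h.trans ha0.symm))
    · exact Or.inr (inj 0 (h.trans hb0.symm))
  have mem1 : ∀ x : Fin 3, (x, (1 : Fin 2)) ∈ S → x = a1 ∨ x = b1 := by
    rintro x (h | h)
    · exact Or.inl (inj 1 (h.trans ha1.symm))
    · exact Or.inr (inj 1 (h.trans hb1.symm))
  have hA0 : (a0, (0:Fin 2)) ∈ S := Or.inl ha0
  have hB0 : (b0, (0:Fin 2)) ∈ S := Or.inr hb0
  have hA1 : (a1, (1:Fin 2)) ∈ S := Or.inl ha1
  have hB1 : (b1, (1:Fin 2)) ∈ S := Or.inr hb1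
  have adj : ∀ (u v : Fin 3 × Fin 2) (hu : u ∈ S) (hv : v ∈ S), prism.Adj u v →
      (prism.induce S).Adj ⟨u, hu⟩ ⟨v, hv⟩ := by
    intro u v hu hv h
    exact h
  have e0 : (prism.induce S).Reachable ⟨(a0,0), hA0⟩ ⟨(b0,0), hB0⟩ :=
    (adj _ _ _ _ (prism_adj_tri a0 b0 0 hab0)).reachable
  have e1 : (prism.induce S).Reachable ⟨(a1,1), hA1⟩ ⟨(b1,1), hB1⟩ :=
    (adj _ _ _ _ (prism_adj_tri a1 b1 1 hab1)).reachable
  have cross : (prism.induce S).Reachable ⟨(a0,0), hA0⟩ ⟨(a1,1), hA1⟩ := by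
    rcases fin3_aux a0 a1 b0 b1 haa hbb hab1 hab0 with h | h
    · refine e0.trans (Adj.reachable (adj (b0,0) (a1,1) hB0 hA1 ?_))
      rw [h]; exact prism_adj_vert_s10 b0
    · refine (Adj.reachable (adj (a0,0) (b1,1) hA0 hB1 ?_)).trans e1.symm
      rw [h]; exact prism_adj_vert_s10 a0
  have hub : ∀ v : S, (prism.induce S).Reachable v ⟨(a0,0), hA0⟩ := by
    rintro ⟨⟨x, t⟩, hv⟩
    fin_cases t
    · rcases mem0 x hv with rfl | rfl
      · exact Reachable.refl _
      · exact e0.symm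
    · rcases mem1 x hv with rfl | rfl
      · exact cross.symm
      · exact (cross.trans e1).symm
  rw [connected_iff]
  exact ⟨fun u v => (hub u).trans (hub v).symm, ⟨⟨(a0,0), hA0⟩⟩⟩

lemma step_aux (f g : Fin 3 × Fin 2 → Fin 3) (hf : IsProperColoring prism 3 f)
    (h : KempeStep prism f g) : ∃ σ : Equiv.Perm (Fin 3), g = σ ∘ f := by
  obtain ⟨i, j, C, hij, ⟨w, hw, hC⟩, hout, hin⟩ := h
  set S : Set (Fin 3 × Fin 2) := {v | f v = i ∨ f v = j} with hSdef
  have hconn := connected_aux f hf i j hij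
  have hCS : C = S := by
    rw [hC]
    ext x
    constructor
    · rintro ⟨hx, _⟩; exact hx
    · intro hx; exact ⟨hx, hconn.preconnected ⟨w, hw⟩ ⟨x, hx⟩⟩
  refine ⟨Equiv.swap i j, funext fun x => ?_⟩
  by_cases hx : x ∈ S
  · have hxC : x ∈ C := hCS ▸ hx
    rcases hx with hi | hj
    · rw [Function.comp_apply, hi, Equiv.swap_apply_left, (hin x hxC).1 hi]
    · rw [Function.comp_apply, hj, Equiv.swap_apply_right, (hin x hxC).2 hj]
  · have h1 : f x ≠ i := fun h => hx (Or.inl h)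
    have h2 : f x ≠ j := fun h => hx (Or.inr h)
    rw [Function.comp_apply, Equiv.swap_apply_of_ne_of_ne h1 h2,
      hout x (fun h => hx (hCS ▸ h))]

/-- for every proper 3-coloring `f` of the triangular prism and
distinct colors `i,j`, the subgraph induced on the two color classes is
connected; consequently every Kempe switching is a global transposition of two
colors, and the color-class partition is invariant under Kempe equivalence. -/
theorem stmt10 :
    (∀ f : Fin 3 × Fin 2 → Fin 3, IsProperColoring prism 3 f →
      ∀ i j : Fin 3, i ≠ j → (prism.induce {v | f v = i ∨ f v = j}).Connected) ∧
    (∀ f g : Fin 3 × Fin 2 → Fin 3, IsProperColoring prism 3 f →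
      KempeStep prism f g → ∃ σ : Equiv.Perm (Fin 3), g = σ ∘ f) ∧
    (∀ f g : Fin 3 × Fin 2 → Fin 3, IsProperColoring prism 3 f →
      KempeEquiv prism f g → ∀ u v, f u = f v ↔ g u = g v) := by
  refine ⟨connected_aux, step_aux, fun f g hf h => ?_⟩
  suffices H : IsProperColoring prism 3 g ∧ ∀ u v, f u = f v ↔ g u = g v from H.2
  induction h with
  | refl => exact ⟨hf, fun u v => Iff.rfl⟩
  | tail _ hstep ih =>
    obtain ⟨hb, hiff⟩ := ih
    obtain ⟨σ, rfl⟩ := step_aux _ _ hb hstep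
    refine ⟨fun u v hadj hc => hb hadj (σ.injective hc), fun u v => ?_⟩
    rw [hiff u v, Function.comp_apply, Function.comp_apply, σ.injective.eq_iff]
end

section
/- Let G be a graph whose vertex set admits a perfect ordering < (i.e., G contains no induced path a–b–c–d with a < b and d < c), and let a ∈ ℤ_{≥0}ⁿ be arbitrary. Order the vertices of the replication graph G_a so that x < y whenever x ∈ G^{(i)}, y ∈ G^{(j)} with i < j (and vertices within each clique ordered arbitrarily). Then this ordering of G_a contains no induced path x₁–x₂–x₃–x₄ with x₁ < x₂ and x₄ < x₃; i.e., G_a is perfectly orderable. -/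
open SimpleGraph

/-- `x₁–x₂–x₃–x₄` is an induced path `P₄` in `H`. -/
def IsInducedP4 {V : Type} (H : SimpleGraph V) (x₁ x₂ x₃ x₄ : V) : Prop :=
  H.Adj x₁ x₂ ∧ H.Adj x₂ x₃ ∧ H.Adj x₃ x₄ ∧
    ¬ H.Adj x₁ x₃ ∧ ¬ H.Adj x₁ x₄ ∧ ¬ H.Adj x₂ x₄

/-- if `G` has a perfect ordering (no induced `P₄` `a–b–c–d` with
`a < b` and `d < c`, Chvátal's characterization), then any ordering of the
replication graph `G_a` which puts `G^(i)` before `G^(j)` whenever `i < j`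
(vertices within each clique ordered arbitrarily) has no such ordered induced
`P₄` either; i.e. `G_a` is perfectly orderable. -/
theorem stmt18 {n : ℕ} (G : SimpleGraph (Fin n)) (ord : Fin n → ℕ)
    (hord : Function.Injective ord)
    (hperf : ∀ a b c d : Fin n, IsInducedP4 G a b c d →
      ¬ (ord a < ord b ∧ ord d < ord c))
    (a : Fin n → ℕ) (ord' : (Σ i : Fin n, Fin (a i)) → ℕ)
    (hord' : Function.Injective ord')
    (hcompat : ∀ x y : Σ i : Fin n, Fin (a i), ord x.1 < ord y.1 → ord' x < ord' y) :
    ∀ x₁ x₂ x₃ x₄ : Σ i : Fin n, Fin (a i),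
      IsInducedP4 (replication G a) x₁ x₂ x₃ x₄ →
      ¬ (ord' x₁ < ord' x₂ ∧ ord' x₄ < ord' x₃) := by
  rintro x₁ x₂ x₃ x₄ ⟨h12, h23, h34, h13, h14, h24⟩ ⟨ho1, ho2⟩
  have hx13 : x₁ ≠ x₃ := by rintro rfl; exact h14 h34
  have hx24 : x₂ ≠ x₄ := by rintro rfl; exact h14 h12
  have hx14 : x₁ ≠ x₄ := by rintro rfl; exact h13 h34.symm
  have b13 : x₁.1 ≠ x₃.1 := fun h => h13 ⟨hx13, Or.inl h⟩
  have b24 : x₂.1 ≠ x₄.1 := fun h => h24 ⟨hx24, Or.inl h⟩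
  have b14 : x₁.1 ≠ x₄.1 := fun h => h14 ⟨hx14, Or.inl h⟩
  obtain ⟨hne12, hb12⟩ := h12
  obtain ⟨hne23, hb23⟩ := h23
  obtain ⟨hne34, hb34⟩ := h34
  have b23 : x₂.1 ≠ x₃.1 := by
    intro h
    rcases hb34 with h' | h'
    · exact b24 (h.trans h')
    · exact h24 ⟨hx24, Or.inr (h ▸ h')⟩
  have b12 : x₁.1 ≠ x₂.1 := by
    intro h
    rcases hb23 with h' | h'
    · exact b13 (h.trans h')
    · exact h13 ⟨hx13, Or.inr (h ▸ h')⟩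
  have b34 : x₃.1 ≠ x₄.1 := by
    intro h
    rcases hb23 with h' | h'
    · exact b23 h'
    · exact h24 ⟨hx24, Or.inr (h ▸ h')⟩
  have g12 : G.Adj x₁.1 x₂.1 := hb12.resolve_left b12
  have g23 : G.Adj x₂.1 x₃.1 := hb23.resolve_left b23
  have g34 : G.Adj x₃.1 x₄.1 := hb34.resolve_left b34
  have n13 : ¬ G.Adj x₁.1 x₃.1 := fun h => h13 ⟨hx13, Or.inr h⟩
  have n14 : ¬ G.Adj x₁.1 x₄.1 := fun h => h14 ⟨hx14, Or.inr h⟩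
  have n24 : ¬ G.Adj x₂.1 x₄.1 := fun h => h24 ⟨hx24, Or.inr h⟩
  have o12 : ord x₁.1 < ord x₂.1 := by
    rcases (lt_or_gt_of_ne (fun h => b12 (hord h))) with h | h
    · exact h
    · exact absurd (hcompat _ _ h) (not_lt.2 ho1.le)
  have o43 : ord x₄.1 < ord x₃.1 := by
    rcases (lt_or_gt_of_ne (fun h => b34 (hord h))) with h | h
    · exact absurd (hcompat _ _ h) (not_lt.2 ho2.le)
    · exact h
  exact hperf x₁.1 x₂.1 x₃.1 x₄.1 ⟨g12, g23, g34, n13, n14, n24⟩ ⟨o12, o43⟩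
end
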